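/- arXiv:2406.07327 — 6 statements merged into one kernel-verified Lean document; each statement's English description precedes it below -/
import Mathlib

section
/- For the DPO loss ℓ(π⁺, π⁻) = log(1 + α·(π⁻/π⁺)^β) with 0 < β < 1 and fixed π⁺ > 0, the partial derivative ∂ℓ/∂π⁺ tends to 0 as π⁻ → 0⁺. -/
open Real Filter Topology

/-- For the DPO loss with 0 < β < 1 and fixed π⁺ > 0, the partial derivative
∂ℓ/∂π⁺ = −(αβ/(1+α(π⁻/π⁺)^β))·(π⁻/π⁺)^(β−1)·(π⁻/(π⁺)²) tends to 0 as π⁻ → 0⁺. -/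
theorem dpo_chosen_grad_vanishes
    (α β πp : ℝ) (hα : 0 < α) (hβ : 0 < β) (hβ1 : β < 1) (hπp : 0 < πp) :
    Tendsto (fun πm : ℝ =>
        -(α * β / (1 + α * (πm / πp) ^ β)) * (πm / πp) ^ (β - 1) * (πm / πp ^ 2))
      (𝓝[>] 0) (𝓝 0) := by
  have h1 : Tendsto (fun πm : ℝ => (πm / πp) ^ β) (𝓝[>] 0) (𝓝 0) := by
    have hdiv : Tendsto (fun πm : ℝ => πm / πp) (𝓝[>] 0) (𝓝 0) := by
      have := (tendsto_id.div_const πp).mono_left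
        (nhdsWithin_le_nhds : 𝓝[>] (0:ℝ) ≤ 𝓝 0)
      simpa using this
    have hc : ContinuousAt (fun x : ℝ => x ^ β) 0 :=
      Real.continuousAt_rpow_const 0 β (Or.inr hβ.le)
    have := hc.tendsto.comp hdiv
    simpa [Function.comp_def, Real.zero_rpow hβ.ne'] using this
  have hg : ContinuousAt (fun s : ℝ => -(α * β / (1 + α * s)) * (s / πp)) 0 := by
    have h0 : (1 : ℝ) + α * 0 ≠ 0 := by norm_num
    exact (((continuousAt_const.div ((continuousAt_const.add
      (continuousAt_const.mul continuousAt_id))) h0).neg).mul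
      (continuousAt_id.div_const πp))
  have h2 : Tendsto (fun πm : ℝ =>
      -(α * β / (1 + α * (πm / πp) ^ β)) * ((πm / πp) ^ β / πp)) (𝓝[>] 0) (𝓝 0) := by
    have := hg.tendsto.comp h1
    simpa [Function.comp_def] using this
  refine h2.congr' ?_
  filter_upwards [self_mem_nhdsWithin] with πm hπm
  have hπm : (0:ℝ) < πm := hπm
  have ht : (0:ℝ) < πm / πp := div_pos hπm hπp
  have key : (πm / πp) ^ (β - 1) * (πm / πp ^ 2) = (πm / πp) ^ β / πp := by
    rw [show β = (β - 1) + 1 by ring, Real.rpow_add_one ht.ne']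
    field_simp
    ring
  rw [← key]
  ring
end

section
/- As π⁻ → 0⁺ with π⁺ fixed, the partial derivative of the DPO loss with respect to π⁺ is asymptotically equivalent to −αβ·(π⁺)^(−β−1)·(π⁻)^β, i.e., their ratio tends to 1. -/
open Real Filter Topology

/-- As π⁻ → 0⁺ with π⁺ fixed, ∂ℓ/∂π⁺ is asymptotically −αβ·(π⁺)^(−β−1)·(π⁻)^β:
their ratio tends to 1. -/
theorem dpo_chosen_grad_asymptotic
    (α β πp : ℝ) (hα : 0 < α) (hβ : 0 < β) (hβ1 : β < 1) (hπp : 0 < πp) :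
    Tendsto (fun πm : ℝ =>
        (-(α * β / (1 + α * (πm / πp) ^ β)) * (πm / πp) ^ (β - 1) * (πm / πp ^ 2)) /
          (-(α * β) * πp ^ (-β - 1) * πm ^ β))
      (𝓝[>] 0) (𝓝 1) := by
  have hlim : Tendsto (fun πm : ℝ => 1 / (1 + α * (πm / πp) ^ β)) (𝓝[>] 0) (𝓝 1) := by
    have h1 : Tendsto (fun πm : ℝ => πm / πp) (𝓝[>] 0) (𝓝[>] 0) := by
      apply tendsto_nhdsWithin_of_tendsto_nhds_of_eventually_within
      · have h0 := ((continuous_id.div_const πp).tendsto 0).mono_left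
          (nhdsWithin_le_nhds (s := Set.Ioi (0:ℝ)))
        simpa using h0
      · filter_upwards [self_mem_nhdsWithin] with x hx
        exact div_pos hx hπp
    have h2 : Tendsto (fun πm : ℝ => (πm / πp) ^ β) (𝓝[>] 0) (𝓝 0) := by
      have hr : Tendsto (fun z : ℝ => z ^ β) (𝓝[>] 0) (𝓝 0) := by
        have := (Real.continuousAt_rpow_const 0 β (Or.inr hβ.le)).tendsto
        simpa [Real.zero_rpow hβ.ne'] using this.mono_left nhdsWithin_le_nhds
      exact hr.comp h1
    have h3 : Tendsto (fun πm : ℝ => 1 + α * (πm / πp) ^ β) (𝓝[>] 0) (𝓝 1) := by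
      have := (h2.const_mul α).const_add 1
      simpa using this
    have := h3.inv₀ (by norm_num)
    simpa using this
  apply hlim.congr'
  filter_upwards [self_mem_nhdsWithin] with πm (hm : 0 < πm)
  have hz : 0 < πm / πp := div_pos hm hπp
  have hA : 0 < (πm / πp) ^ β := rpow_pos_of_pos hz β
  have h1 : (0:ℝ) < 1 + α * (πm / πp) ^ β := by positivity
  have e1 : (πm / πp) ^ (β - 1) = (πm / πp) ^ β / (πm / πp) := by
    rw [rpow_sub hz, rpow_one]
  have e2 : πm ^ β = (πm / πp) ^ β * πp ^ β := by
    rw [div_rpow hm.le hπp.le]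
    field_simp
  have e3 : πp ^ (-β - 1) = (πp ^ β * πp)⁻¹ := by
    rw [show -β - 1 = -(β + 1) by ring, rpow_neg hπp.le, rpow_add hπp, rpow_one]
  have hπpβ : (0:ℝ) < πp ^ β := rpow_pos_of_pos hπp β
  rw [e1, e2, e3]
  field_simp
end

section
/- For the flexible-β DPO loss ℓ(π⁺, π⁻) = log(1 + α·(π⁻)^β⁻/(π⁺)^β⁺), as π⁻ → 0⁺ with π⁺ > 0 fixed, the partial derivative with respect to π⁺ is asymptotically −αβ⁺·(π⁺)^(−β⁺−1)·(π⁻)^β⁻, and hence tends to 0. -/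
open Real Filter Topology

lemma flex_deriv_eq (α βp βm πp πm : ℝ) (hα : 0 < α) (hπp : 0 < πp) (hπm : 0 < πm) :
    deriv (fun p : ℝ => Real.log (1 + α * πm ^ βm * p ^ (-βp))) πp
      = (α * πm ^ βm * (-βp * πp ^ (-βp - 1))) / (1 + α * πm ^ βm * πp ^ (-βp)) := by
  have hD : 0 < 1 + α * πm ^ βm * πp ^ (-βp) := by positivity
  have h1 : HasDerivAt (fun p : ℝ => p ^ (-βp)) (-βp * πp ^ (-βp - 1)) πp :=
    Real.hasDerivAt_rpow_const (Or.inl hπp.ne')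
  have h2 := (h1.const_mul (α * πm ^ βm)).const_add 1
  have h3 := h2.log hD.ne'
  simpa [mul_comm, mul_assoc, mul_left_comm] using h3.deriv

/-- Flexible-β DPO: ℓ(π⁺, π⁻) = log(1 + α·(π⁻)^β⁻·(π⁺)^(−β⁺)); as π⁻ → 0⁺ with π⁺
fixed, ∂ℓ/∂π⁺ is asymptotically −αβ⁺·(π⁺)^(−β⁺−1)·(π⁻)^β⁻ and tends to 0. -/
theorem flex_dpo_chosen_grad
    (α βp βm πp : ℝ) (hα : 0 < α) (hβp : 0 < βp) (hβm : 0 < βm) (hβm1 : βm < 1)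
    (hπp : 0 < πp) :
    Tendsto (fun πm : ℝ =>
        deriv (fun p : ℝ => Real.log (1 + α * πm ^ βm * p ^ (-βp))) πp /
          (-(α * βp) * πp ^ (-βp - 1) * πm ^ βm))
      (𝓝[>] 0) (𝓝 1) ∧
    Tendsto (fun πm : ℝ =>
        deriv (fun p : ℝ => Real.log (1 + α * πm ^ βm * p ^ (-βp))) πp)
      (𝓝[>] 0) (𝓝 0) := by
  have hrpow : Tendsto (fun x : ℝ => x ^ βm) (𝓝[>] (0:ℝ)) (𝓝 0) := by
    have := (Real.continuousAt_rpow_const 0 βm (Or.inr hβm.le)).tendsto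
    simpa [Real.zero_rpow hβm.ne'] using this.mono_left nhdsWithin_le_nhds
  have hD : Tendsto (fun πm : ℝ => 1 + α * πm ^ βm * πp ^ (-βp)) (𝓝[>] (0:ℝ)) (𝓝 1) := by
    have : Tendsto (fun πm : ℝ => 1 + α * πm ^ βm * πp ^ (-βp)) (𝓝[>] (0:ℝ))
        (𝓝 (1 + α * 0 * πp ^ (-βp))) := by
      exact (tendsto_const_nhds.add (((hrpow.const_mul α).mul_const _)))
    simpa using this
  have hratio : Tendsto (fun πm : ℝ =>
      deriv (fun p : ℝ => Real.log (1 + α * πm ^ βm * p ^ (-βp))) πp /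
        (-(α * βp) * πp ^ (-βp - 1) * πm ^ βm)) (𝓝[>] 0) (𝓝 1) := by
    have h := (hD.inv₀ one_ne_zero)
    rw [inv_one] at h
    refine h.congr' ?_
    filter_upwards [self_mem_nhdsWithin] with πm (hπm : 0 < πm)
    rw [flex_deriv_eq α βp βm πp πm hα hπp hπm]
    have h1 : πm ^ βm ≠ 0 := (Real.rpow_pos_of_pos hπm βm).ne'
    have h2 : πp ^ (-βp - 1) ≠ 0 := (Real.rpow_pos_of_pos hπp _).ne'
    have hDne : (1 + α * πm ^ βm * πp ^ (-βp)) ≠ 0 := by positivity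
    field_simp
  refine ⟨hratio, ?_⟩
  have hg : Tendsto (fun πm : ℝ => -(α * βp) * πp ^ (-βp - 1) * πm ^ βm) (𝓝[>] (0:ℝ)) (𝓝 0) := by
    simpa using (hrpow.const_mul (-(α * βp) * πp ^ (-βp - 1)))
  have := hratio.mul hg
  rw [one_mul] at this
  refine this.congr' ?_
  filter_upwards [self_mem_nhdsWithin] with πm (hπm : 0 < πm)
  have h1 : πm ^ βm ≠ 0 := (Real.rpow_pos_of_pos hπm βm).ne'
  have h2 : πp ^ (-βp - 1) ≠ 0 := (Real.rpow_pos_of_pos hπp _).ne'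
  have hne : -(α * βp) * πp ^ (-βp - 1) * πm ^ βm ≠ 0 := by
    apply mul_ne_zero (mul_ne_zero (neg_ne_zero.mpr (by positivity)) h2) h1
  field_simp
end

section
/- For the SFT-regularized DPO loss ℓ(π⁺, π⁻) = log(1 + α·(π⁻/π⁺)^β) − γ·log(π⁺) with γ > 0, as π⁻ → 0⁺ with π⁺ > 0 fixed, the partial derivative with respect to π⁺ tends to −γ/π⁺, which is strictly negative. -/
open Real Filter Topology

/-- SFT-regularized DPO: ℓ(π⁺, π⁻) = log(1 + α·(π⁻/π⁺)^β) − γ·log π⁺; as π⁻ → 0⁺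
with π⁺ fixed, ∂ℓ/∂π⁺ tends to −γ/π⁺, which is strictly negative. -/
theorem sft_dpo_chosen_grad_limit
    (α β γ πp : ℝ) (hα : 0 < α) (hβ : 0 < β) (hβ1 : β < 1) (hγ : 0 < γ) (hπp : 0 < πp) :
    Tendsto (fun πm : ℝ =>
        deriv (fun p : ℝ => Real.log (1 + α * (πm / p) ^ β) - γ * Real.log p) πp)
      (𝓝[>] 0) (𝓝 (-(γ / πp))) ∧ -(γ / πp) < 0 := by
  constructor
  · -- key: explicit derivative formula for πm > 0
    have hkey : ∀ πm : ℝ, 0 < πm →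
        deriv (fun p : ℝ => Real.log (1 + α * (πm / p) ^ β) - γ * Real.log p) πp
          = -(α * β * (πm / πp) ^ β) / (πp * (1 + α * (πm / πp) ^ β)) - γ / πp := by
      intro πm hπm
      have hx : 0 < πm / πp := div_pos hπm hπp
      have hpos : 0 < 1 + α * (πm / πp) ^ β := by positivity
      have h1 : HasDerivAt (fun p : ℝ => πm / p) (-(πm / πp ^ 2)) πp := by
        have := (hasDerivAt_inv hπp.ne').const_mul πm
        simpa [div_eq_mul_inv, mul_comm, neg_mul, mul_neg] using this
      have h2 : HasDerivAt (fun p : ℝ => (πm / p) ^ β)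
          (-(πm / πp ^ 2) * β * (πm / πp) ^ (β - 1)) πp :=
        h1.rpow_const (Or.inl hx.ne')
      have h3 : HasDerivAt (fun p : ℝ => 1 + α * (πm / p) ^ β)
          (α * (-(πm / πp ^ 2) * β * (πm / πp) ^ (β - 1))) πp :=
        (h2.const_mul α).const_add 1
      have h4 : HasDerivAt (fun p : ℝ => Real.log (1 + α * (πm / p) ^ β))
          (α * (-(πm / πp ^ 2) * β * (πm / πp) ^ (β - 1)) / (1 + α * (πm / πp) ^ β)) πp :=
        h3.log hpos.ne'
      have h5 : HasDerivAt (fun p : ℝ => γ * Real.log p) (γ * πp⁻¹) πp :=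
        (Real.hasDerivAt_log hπp.ne').const_mul γ
      have h6 : deriv (fun p : ℝ => Real.log (1 + α * (πm / p) ^ β) - γ * Real.log p) πp
          = α * (-(πm / πp ^ 2) * β * (πm / πp) ^ (β - 1)) / (1 + α * (πm / πp) ^ β) - γ * πp⁻¹ :=
        (h4.sub h5).deriv
      rw [h6]
      have hrw : (πm / πp) ^ (β - 1) = (πm / πp) ^ β / (πm / πp) :=
        Real.rpow_sub_one hx.ne' β
      rw [hrw]
      field_simp
    have h0 : Tendsto (fun πm : ℝ => (πm / πp) ^ β) (𝓝[>] 0) (𝓝 0) := by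
      have hc : ContinuousAt (fun x : ℝ => x ^ β) 0 :=
        Real.continuousAt_rpow_const 0 β (Or.inr hβ.le)
      have hd : Tendsto (fun πm : ℝ => πm / πp) (𝓝[>] 0) (𝓝 0) := by
        have h := ((continuous_id.div_const πp).tendsto 0).mono_left
          (nhdsWithin_le_nhds (s := Set.Ioi (0:ℝ)))
        simpa using h
      have := hc.tendsto.comp hd
      simpa [Real.zero_rpow hβ.ne', Function.comp_def] using this
    have hc2 : ContinuousAt (fun x : ℝ => -(α * β * x) / (πp * (1 + α * x)) - γ / πp) 0 := by
      apply ContinuousAt.sub _ continuousAt_const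
      apply ContinuousAt.div (by fun_prop) (by fun_prop)
      simp [hπp.ne']
    have hmain := hc2.tendsto.comp h0
    have hval : (fun x : ℝ => -(α * β * x) / (πp * (1 + α * x)) - γ / πp) 0 = -(γ / πp) := by
      simp [neg_div]
    simp only [hval] at hmain
    refine hmain.congr' ?_
    filter_upwards [self_mem_nhdsWithin] with πm hπm
    exact (hkey πm hπm).symm
  · exact neg_neg_of_pos (div_pos hγ hπp)
end

section
/- SimPO gradient limit (case β > L): let f(π⁻) = (β/(L·π⁻))·σ(−(c − (β/L)·log π⁻)) where σ is the sigmoid, c ∈ ℝ a constant, and L > 0. If β > L, then f(π⁻) → 0 as π⁻ → 0⁺. -/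
open Real Filter Topology

/-- SimPO gradient limit, case β > L: f(π⁻) = (β/(L·π⁻))·σ((β/L)·log π⁻ − c) → 0
as π⁻ → 0⁺, where σ(x) = 1/(1+e^(−x)). -/
theorem simpo_grad_limit_beta_gt
    (σ : ℝ → ℝ) (hσ : ∀ x, σ x = 1 / (1 + Real.exp (-x)))
    (β L c : ℝ) (hL : 0 < L) (hβ : L < β) :
    Tendsto (fun πm : ℝ => β / (L * πm) * σ (β / L * Real.log πm - c))
      (𝓝[>] 0) (𝓝 0) := by
  have hβ0 : 0 < β := hL.trans hβ
  set r : ℝ := β / L with hr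
  have hr1 : 1 < r := (one_lt_div hL).mpr hβ
  -- upper bound function
  have hσ_nonneg : ∀ x, 0 ≤ σ x := by
    intro x
    rw [hσ]
    positivity
  have hσ_le : ∀ x, σ x ≤ Real.exp x := by
    intro x
    rw [hσ]
    rw [div_le_iff₀ (by positivity), mul_add, mul_one, ← Real.exp_add,
      add_neg_cancel, Real.exp_zero]
    linarith [Real.exp_pos x]
  have key : Tendsto (fun πm : ℝ => (r * Real.exp (-c)) * πm ^ (r - 1))
      (𝓝[>] 0) (𝓝 0) := by
    have h0 : Tendsto (fun πm : ℝ => πm ^ (r - 1)) (𝓝[>] 0) (𝓝 0) := by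
      have := (Real.continuousAt_rpow_const 0 (r - 1)
        (Or.inr (by linarith))).continuousWithinAt (s := Set.Ioi 0)
      simpa [Real.zero_rpow (by linarith : r - 1 ≠ 0), ContinuousWithinAt] using this
    have := h0.const_mul (r * Real.exp (-c))
    simpa using this
  apply squeeze_zero' (g := fun πm : ℝ => (r * Real.exp (-c)) * πm ^ (r - 1)) _ _ key
  · filter_upwards [self_mem_nhdsWithin] with x hx
    have hx0 : (0:ℝ) < x := hx
    have : 0 < β / (L * x) := by positivity
    exact mul_nonneg this.le (hσ_nonneg _)
  · filter_upwards [self_mem_nhdsWithin] with x hx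
    have hx0 : (0:ℝ) < x := hx
    have h1 : β / (L * x) * σ (r * Real.log x - c)
        ≤ β / (L * x) * Real.exp (r * Real.log x - c) := by
      apply mul_le_mul_of_nonneg_left (hσ_le _) (by positivity)
    refine h1.trans_eq ?_
    have hxr : Real.exp (r * Real.log x) = x ^ r := by
      rw [Real.rpow_def_of_pos hx0, mul_comm]
    have hx1 : x ^ (r - 1) = x ^ r / x := by
      rw [Real.rpow_sub hx0, Real.rpow_one]
    rw [Real.exp_sub, hxr, hx1, Real.exp_neg]
    field_simp
    have hrL : r * L = β := div_mul_cancel₀ β hL.ne'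
    linear_combination (-(x ^ r * Real.exp c * x)) * hrL + (β * x ^ r * Real.exp c * x - β) * (mul_inv_cancel₀ hL.ne' : L * L⁻¹ = 1)
end

section
/- SimPO gradient limit (case β < L): let f(π⁻) = (β/(L·π⁻))·σ((β/L)·log π⁻ − c) with σ the sigmoid, c ∈ ℝ, L > 0. If 0 < β < L, then f(π⁻) → +∞ as π⁻ → 0⁺. -/
open Real Filter Topology

/-- SimPO gradient limit, case β < L: f(π⁻) = (β/(L·π⁻))·σ((β/L)·log π⁻ − c) → +∞
as π⁻ → 0⁺, where σ(x) = 1/(1+e^(−x)). -/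
theorem simpo_grad_limit_beta_lt
    (σ : ℝ → ℝ) (hσ : ∀ x, σ x = 1 / (1 + Real.exp (-x)))
    (β L c : ℝ) (hL : 0 < L) (hβ : 0 < β) (hβL : β < L) :
    Tendsto (fun πm : ℝ => β / (L * πm) * σ (β / L * Real.log πm - c))
      (𝓝[>] 0) atTop := by
  set D : ℝ → ℝ := fun πm => L / β * (πm + Real.exp ((1 - β / L) * Real.log πm + c))
    with hD
  have hcoef : 0 < 1 - β / L := by
    have : β / L < 1 := (div_lt_one hL).2 hβL
    linarith
  have hDlim : Tendsto D (𝓝[>] (0:ℝ)) (𝓝[>] (0:ℝ)) := by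
    rw [tendsto_nhdsWithin_iff]
    constructor
    · have h1 : Tendsto (fun πm : ℝ => πm) (𝓝[>] (0:ℝ)) (𝓝 0) :=
        tendsto_id.mono_right nhdsWithin_le_nhds
      have h2 : Tendsto (fun πm : ℝ => (1 - β / L) * Real.log πm + c)
          (𝓝[>] (0:ℝ)) atBot := by
        apply tendsto_atBot_add_const_right
        exact (Real.tendsto_log_nhdsGT_zero).const_mul_atBot hcoef
      have h3 : Tendsto (fun πm : ℝ => Real.exp ((1 - β / L) * Real.log πm + c))
          (𝓝[>] (0:ℝ)) (𝓝 0) := Real.tendsto_exp_atBot.comp h2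
      have := (h1.add h3).const_mul (L / β)
      simpa using this
    · filter_upwards [self_mem_nhdsWithin] with x hx
      have hx0 : (0:ℝ) < x := hx
      have : 0 < x + Real.exp ((1 - β / L) * Real.log x + c) :=
        by positivity
      exact mul_pos (div_pos hL hβ) this
  have hmain : Tendsto (fun πm => (D πm)⁻¹) (𝓝[>] (0:ℝ)) atTop :=
    tendsto_inv_nhdsGT_zero.comp hDlim
  apply hmain.congr'
  filter_upwards [self_mem_nhdsWithin] with x hx
  have hx0 : (0:ℝ) < x := hx
  have hE : Real.exp ((1 - β / L) * Real.log x + c) =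
      Real.exp (-(β / L * Real.log x - c)) * x := by
    conv_lhs => rw [show (1 - β / L) * Real.log x + c
      = -(β / L * Real.log x - c) + Real.log x by ring]
    rw [Real.exp_add, Real.exp_log hx0]
  rw [hσ, hD]
  simp only [hE]
  set E := Real.exp (-(β / L * Real.log x - c)) with hEdef
  have hEpos : 0 < E := Real.exp_pos _
  have h1E : (1 : ℝ) + E ≠ 0 := by positivity
  field_simp
end
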